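/- If a and b are Lyndon words that overlap, meaning a = uv and b = vw with v nonempty and uw nonempty, then a < b in the lexicographic order. -/
import Mathlib


/-- A Lyndon word: a nonempty word strictly lexicographically smaller than
all of its proper cyclic rotations. -/
def IsLyndon {X : Type*} [LinearOrder X] (w : List X) : Prop :=
  w ≠ [] ∧ ∀ a b : List X, a ≠ [] → b ≠ [] → w = a ++ b →
    List.Lex (· < ·) w (b ++ a)

section aux

variable {X : Type*} [LinearOrder X]

lemma lex_prefix' (t : List X) {s : List X} (hs : s ≠ []) :
    List.Lex (· < ·) t (t ++ s) := by
  induction t with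
  | nil =>
    cases s with
    | nil => exact absurd rfl hs
    | cons a s => exact List.Lex.nil
  | cons a t ih => exact List.Lex.cons ih

lemma lex_irrefl' (t : List X) (h : List.Lex (· < ·) t t) : False := by
  induction t with
  | nil => cases h
  | cons a t ih =>
    cases h with
    | rel h => exact lt_irrefl _ h
    | cons h => exact ih h

lemma lex_asymm' {s t : List X} (h1 : List.Lex (· < ·) s t)
    (h2 : List.Lex (· < ·) t s) : False := by
  induction s generalizing t with
  | nil => cases h2
  | cons a s ih =>
    cases t with
    | nil => cases h1
    | cons b t =>
      cases h1 with
      | rel h =>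
        cases h2 with
        | rel h' => exact absurd h' (not_lt.2 h.le)
        | cons _ => exact lt_irrefl _ h
      | cons hst =>
        cases h2 with
        | rel h' => exact lt_irrefl _ h'
        | cons hts => exact ih hst hts

lemma lex_append_same' {p : List X} : ∀ {t s : List X}, p.length = t.length →
    List.Lex (· < ·) (p ++ s) (t ++ s) → List.Lex (· < ·) p t ∨ p = t := by
  induction p with
  | nil =>
    intro t s hlen h
    cases t with
    | nil => exact Or.inr rfl
    | cons b t => simp at hlen
  | cons a p ih =>
    intro t s hlen h
    cases t with
    | nil => simp at hlen
    | cons b t =>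
      cases h with
      | rel h => exact Or.inl (List.Lex.rel h)
      | cons h =>
        rcases ih (by simpa using hlen) h with h' | h'
        · exact Or.inl (List.Lex.cons h')
        · exact Or.inr (by rw [h'])

lemma lex_split' {y : List X} : ∀ {x z : List X}, List.Lex (· < ·) x (y ++ z) →
    ∀ z', List.Lex (· < ·) x (y ++ z') ∨
      ∃ t, x = y ++ t ∧ List.Lex (· < ·) t z := by
  induction y with
  | nil =>
    intro x z h z'
    exact Or.inr ⟨x, rfl, h⟩
  | cons a y ih =>
    intro x z h z'
    cases x with
    | nil => exact Or.inl List.Lex.nil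
    | cons b x =>
      cases h with
      | rel h => exact Or.inl (List.Lex.rel h)
      | cons h =>
        rcases ih h z' with h' | ⟨t, rfl, ht⟩
        · exact Or.inl (List.Lex.cons h')
        · exact Or.inr ⟨t, rfl, ht⟩

/-- A Lyndon word is smaller than each of its proper nonempty suffixes. -/
lemma lyndon_lt_suffix' {p s : List X} (hp : p ≠ []) (hs : s ≠ [])
    (h : IsLyndon (p ++ s)) : List.Lex (· < ·) (p ++ s) s := by
  have hrot := h.2 p s hp hs rfl
  rcases lex_split' hrot [] with h' | ⟨t, heq, ht⟩
  · simpa using h'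
  · have htne : t ≠ [] := by
      rintro rfl
      rw [List.append_nil] at heq
      have := congrArg List.length heq
      simp at this
      exact hp this
    have hrot2 := h.2 s t hs htne heq
    have hlen : p.length = t.length := by
      have := congrArg List.length heq
      simp at this
      omega
    rcases lex_append_same' hlen hrot2 with h'' | hpt
    · exact (lex_asymm' h'' ht).elim
    · subst hpt
      exact (lex_irrefl' _ ht).elim

end aux

theorem stmt5 {X : Type*} [LinearOrder X] (u v w : List X) (hv : v ≠ [])
    (huw : u ++ w ≠ []) (h1 : IsLyndon (u ++ v)) (h2 : IsLyndon (v ++ w)) :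
    List.Lex (· < ·) (u ++ v) (v ++ w) := by
  rcases eq_or_ne u [] with rfl | hu
  · simp only [List.nil_append] at *
    exact lex_prefix' v huw
  · have h : List.Lex (· < ·) (u ++ v) (v ++ ([] : List X)) := by
      simpa using lyndon_lt_suffix' hu hv h1
    rcases lex_split' h w with h'' | ⟨t, heq, ht⟩
    · exact h''
    · cases ht
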